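/- Let $V$ be a finite-dimensional real inner product space with basis $\alpha_1, \dots, \alpha_r$ satisfying $\langle \alpha_i, \alpha_j\rangle \le 0$ for $i \neq j$, dual basis $\varpi_1, \dots, \varpi_r$ with $\langle \alpha_i, \varpi_j\rangle = \delta_{ij}$ and $\langle \varpi_i, \varpi_j \rangle \ge 0$. Let $C^- = \{Y \mid \forall i, \langle \alpha_i, Y\rangle \le 0\}$, let $p : V \to C^-$ be the nearest-point projection onto the closed convex cone $C^-$, and define the partial order $Y' \prec Y$ by $\langle \varpi_i, Y'\rangle \le \langle \varpi_i, Y\rangle$ for all $i$. Then for every $Y_0 \in V$, the projection $p(Y_0)$ is the greatest element of the set $\{Y \in C^- \mid Y \prec Y_0\}$: it lies in this set and every $Y' \in C^-$ with $Y' \prec Y_0$ satisfies $Y' \prec p(Y_0)$. -/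

import Mathlib

open scoped RealInnerProductSpace

/-- The nearest-point projection of `Y₀` onto the negative Weyl chamber
`C⁻ = {Y | ∀ i, ⟪αᵢ, Y⟫ ≤ 0}` is the greatest lower bound of `Y₀` in the
dominance order `Y' ≺ Y ↔ ∀ i, ⟪ϖᵢ, Y'⟫ ≤ ⟪ϖᵢ, Y⟫`. -/
theorem stmt_6 {V : Type*} [NormedAddCommGroup V] [InnerProductSpace ℝ V]
    [FiniteDimensional ℝ V] {r : ℕ}
    (α : Module.Basis (Fin r) ℝ V) (ϖ : Fin r → V)
    (hdual : ∀ i j, ⟪α i, ϖ j⟫ = if i = j then (1 : ℝ) else 0)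
    (hobtuse : ∀ i j, i ≠ j → ⟪α i, α j⟫ ≤ 0)
    (hweights : ∀ i j, 0 ≤ ⟪ϖ i, ϖ j⟫)
    (Y₀ p : V)
    (hpmem : ∀ i, ⟪α i, p⟫ ≤ 0)
    (hproj : ∀ z, (∀ i, ⟪α i, z⟫ ≤ 0) → ‖Y₀ - p‖ ≤ ‖Y₀ - z‖) :
    (∀ i, ⟪ϖ i, p⟫ ≤ ⟪ϖ i, Y₀⟫) ∧
      ∀ Y', (∀ i, ⟪α i, Y'⟫ ≤ 0) → (∀ i, ⟪ϖ i, Y'⟫ ≤ ⟪ϖ i, Y₀⟫) →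
        ∀ i, ⟪ϖ i, Y'⟫ ≤ ⟪ϖ i, p⟫ := by
  -- The chamber as a convex set
  set K : Set V := {z | ∀ i, ⟪α i, z⟫ ≤ 0} with hK
  have hconv : Convex ℝ K := by
    intro x hx y hy s t hs ht hst i
    have h1 := hx i; have h2 := hy i
    simp only [inner_add_right, real_inner_smul_right]
    nlinarith
  have hpK : p ∈ K := hpmem
  have hmin : ‖Y₀ - p‖ = ⨅ w : K, ‖Y₀ - w‖ := by
    haveI : Nonempty K := ⟨⟨p, hpK⟩⟩
    refine le_antisymm (le_ciInf fun w => hproj w w.2) ?_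
    have hbdd : BddBelow (Set.range fun w : K => ‖Y₀ - (w : V)‖) := by
      refine ⟨0, ?_⟩
      rintro x ⟨w, rfl⟩
      positivity
    exact ciInf_le hbdd ⟨p, hpK⟩
  -- variational inequality
  have hvar : ∀ z ∈ K, ⟪Y₀ - p, z - p⟫ ≤ 0 :=
    (norm_eq_iInf_iff_real_inner_le_zero hconv hpK).mp hmin
  -- orthogonality ⟪Y₀ - p, p⟫ = 0
  have horth : ⟪Y₀ - p, p⟫ = 0 := by
    have h0 : (0 : V) ∈ K := by intro i; simp
    have h2 : ((2 : ℝ) • p) ∈ K := by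
      intro i
      rw [real_inner_smul_right]
      nlinarith [hpmem i]
    have e0 := hvar 0 h0
    have e2 := hvar ((2 : ℝ) • p) h2
    rw [zero_sub, inner_neg_right] at e0
    have : (2 : ℝ) • p - p = p := by
      rw [two_smul]; abel
    rw [this] at e2
    linarith
  -- coordinates: ⟪ϖ i, v⟫ is the i-th coordinate of v in basis α
  have hcoord : ∀ (i : Fin r) (v : V), ⟪ϖ i, v⟫ = α.repr v i := by
    intro i v
    conv_lhs => rw [← α.sum_repr v]
    rw [inner_sum, Finset.sum_eq_single i]
    · rw [real_inner_smul_right, real_inner_comm, hdual, if_pos rfl, mul_one]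
    · intro j _ hne
      rw [real_inner_smul_right, real_inner_comm, hdual, if_neg hne, mul_zero]
    · simp
  -- expansion lemma
  have hrepr : ∀ v : V, v = ∑ i, ⟪ϖ i, v⟫ • α i := by
    intro v
    conv_lhs => rw [← α.sum_repr v]
    exact Finset.sum_congr rfl fun i _ => by rw [hcoord]
  -- the coordinates of Y₀ - p are nonnegative
  have ha : ∀ i, 0 ≤ ⟪ϖ i, Y₀ - p⟫ := by
    intro i
    have hz : p - ϖ i ∈ K := by
      intro j
      rw [inner_sub_right, hdual j i]
      split_ifs with h
      · linarith [hpmem j]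
      · simpa using hpmem j
    have := hvar (p - ϖ i) hz
    have h1 : p - ϖ i - p = -ϖ i := by abel
    rw [h1, inner_neg_right] at this
    rw [real_inner_comm]
    linarith
  -- part 1
  have part1 : ∀ i, ⟪ϖ i, p⟫ ≤ ⟪ϖ i, Y₀⟫ := by
    intro i
    have := ha i
    rw [inner_sub_right] at this
    linarith
  refine ⟨part1, ?_⟩
  -- complementarity: each a i * ⟪α i, p⟫ = 0
  have hcomp : ∀ i, ⟪ϖ i, Y₀ - p⟫ * ⟪α i, p⟫ = 0 := by
    have hsum : ∑ i, ⟪ϖ i, Y₀ - p⟫ * ⟪α i, p⟫ = 0 := by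
      have : ⟪Y₀ - p, p⟫ = ∑ i, ⟪ϖ i, Y₀ - p⟫ * ⟪α i, p⟫ := by
        conv_lhs => rw [hrepr (Y₀ - p)]
        rw [sum_inner]
        exact Finset.sum_congr rfl fun i _ => real_inner_smul_left _ _ _
      rw [← this, horth]
    have hnp : ∀ i ∈ Finset.univ, ⟪ϖ i, Y₀ - p⟫ * ⟪α i, p⟫ ≤ 0 := fun i _ =>
      mul_nonpos_of_nonneg_of_nonpos (ha i) (hpmem i)
    intro i
    have := (Finset.sum_eq_zero_iff_of_nonpos hnp).mp hsum i (Finset.mem_univ i)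
    exact this
  -- part 2
  intro Y' hY'mem hY'le
  set b : Fin r → ℝ := fun i => ⟪ϖ i, p - Y'⟫ with hb
  -- key: if b i < 0 then ⟪α i, p⟫ = 0
  have hkey : ∀ i, b i < 0 → ⟪α i, p⟫ = 0 := by
    intro i hbi
    have h1 : 0 ≤ ⟪ϖ i, Y₀ - p⟫ + b i := by
      have := hY'le i
      simp only [hb, inner_sub_right]
      linarith
    have h2 : 0 < ⟪ϖ i, Y₀ - p⟫ := by linarith
    have := hcomp i
    exact (mul_eq_zero.mp this).resolve_left (ne_of_gt h2)
  -- the negative part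
  set N : Finset (Fin r) := Finset.univ.filter (fun i => b i < 0) with hN
  set d : V := ∑ i ∈ N, b i • α i with hd
  have hd1 : ⟪d, p - Y'⟫ ≤ 0 := by
    rw [hd, sum_inner]
    refine Finset.sum_nonpos fun i hi => ?_
    have hbi : b i < 0 := (Finset.mem_filter.mp hi).2
    rw [real_inner_smul_left, inner_sub_right, hkey i hbi, zero_sub]
    have : 0 ≤ -⟪α i, Y'⟫ := by linarith [hY'mem i]
    nlinarith
  have hd2 : 0 ≤ ⟪d, (p - Y') - d⟫ := by
    have hsplit : (p - Y') - d = ∑ i ∈ Nᶜ, b i • α i := by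
      have := hrepr (p - Y')
      rw [hd]
      rw [← Finset.sum_add_sum_compl N (fun i => b i • α i)] at this
      rw [this]; abel
    rw [hsplit, hd, sum_inner]
    refine Finset.sum_nonneg fun i hi => ?_
    rw [real_inner_smul_left, inner_sum]
    rw [Finset.mul_sum]
    refine Finset.sum_nonneg fun j hj => ?_
    rw [real_inner_smul_right]
    have hbi : b i < 0 := (Finset.mem_filter.mp hi).2
    have hbj : ¬ b j < 0 := by
      have := Finset.mem_compl.mp hj
      simp only [hN, Finset.mem_filter, Finset.mem_univ, true_and] at this
      exact this
    have hij : i ≠ j := by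
      rintro rfl; exact hbj hbi
    have h1 := hobtuse i j hij
    have h2 : b j * ⟪α i, α j⟫ ≤ 0 := mul_nonpos_of_nonneg_of_nonpos (not_lt.mp hbj) h1
    nlinarith [mul_nonneg (neg_nonneg.mpr (le_of_lt hbi)) (neg_nonneg.mpr h2)]
  have hdzero : d = 0 := by
    have : ⟪d, d⟫ ≤ 0 := by
      have h : ⟪d, (p - Y') - d⟫ = ⟪d, p - Y'⟫ - ⟪d, d⟫ := inner_sub_right _ _ _
      linarith
    exact real_inner_self_nonpos.mp this
  -- conclude: no b i is negative
  have hbnn : ∀ i, 0 ≤ b i := by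
    intro i
    by_contra hneg
    push_neg at hneg
    have hiN : i ∈ N := by simp [hN, hneg]
    have : ⟪ϖ i, d⟫ = b i := by
      rw [hd, inner_sum, Finset.sum_eq_single i]
      · rw [real_inner_smul_right, real_inner_comm, hdual, if_pos rfl, mul_one]
      · intro j _ hne
        rw [real_inner_smul_right, real_inner_comm, hdual, if_neg hne, mul_zero]
      · intro h; exact absurd hiN h
    rw [hdzero, inner_zero_right] at this
    linarith
  intro i
  have := hbnn i
  simp only [hb, inner_sub_right] at this
  linarith
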